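/- (Pointwise nondegeneracy of the canonical multisymplectic form on the bundle of 2-horizontal m-forms.) Let V and U be finite-dimensional real vector spaces, p : V → U a surjective linear map, and m := dim U ≥ 1. Let A ⊆ Λ^m V* be the subspace of 2-horizontal alternating m-forms, i.e. those α ∈ Λ^m V* such that α(w₁, …, w_m) = 0 whenever at least two of the arguments w₁, …, w_m lie in ker p. Suppose v₀ ∈ V and α₀ ∈ A are such that for every choice of pairs (v₁, α₁), …, (v_m, α_m) ∈ V × A one has Σ_{i=0}^{m} (−1)^i · α_i(v₀, …, v_{i−1}, v_{i+1}, …, v_m) = 0 (where in the i-th summand α_i is evaluated on the m vectors obtained by omitting v_i from v₀, …, v_m). Then v₀ = 0 and α₀ = 0. -/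

import Mathlib

/-- The set of `2`-horizontal alternating `m`-forms with respect to a linear map `p`:
those forms vanishing whenever at least two arguments lie in `ker p`. -/
def twoHorizontal {V U : Type*} [AddCommGroup V] [Module ℝ V] [AddCommGroup U] [Module ℝ U]
    (p : V →ₗ[ℝ] U) (m : ℕ) : Set (V [⋀^Fin m]→ₗ[ℝ] ℝ) :=
  {α | ∀ w : Fin m → V,
    (∃ i j : Fin m, i ≠ j ∧ p (w i) = 0 ∧ p (w j) = 0) → α w = 0}

/-- Two members of a family lying in the span of a single vector force linear dependence. -/
theorem aux_notLI {U : Type*} [AddCommGroup U] [Module ℝ U] {m : ℕ} {u₁ : U} {w : Fin m → U}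
    {i j : Fin m} (hij : i ≠ j) (hi : w i ∈ Submodule.span ℝ {u₁})
    (hj : w j ∈ Submodule.span ℝ {u₁}) :
    ¬ LinearIndependent ℝ w := by
  intro li
  obtain ⟨a, ha⟩ := Submodule.mem_span_singleton.mp hi
  obtain ⟨b, hb⟩ := Submodule.mem_span_singleton.mp hj
  have hji : j ≠ i := fun h => hij h.symm
  set g : Fin m → ℝ := fun k => if k = i then b else if k = j then -a else 0 with hg
  have hterm : ∀ k, g k • w k =
      (if k = i then b • w i else 0) + (if k = j then (-a) • w j else 0) := by
    intro k
    by_cases h1 : k = i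
    · subst h1; simp [hg, if_neg hji, hij]
    · by_cases h2 : k = j
      · subst h2; simp [hg, h1]
      · simp [hg, h1, h2]
  have hsum : ∑ k, g k • w k = 0 := by
    simp only [hterm, Finset.sum_add_distrib, Finset.sum_ite_eq', Finset.mem_univ, if_true]
    rw [← ha, ← hb, smul_smul, smul_smul, mul_comm]
    module
  have hz := Fintype.linearIndependent_iff.mp li g hsum
  have hbz : b = 0 := by simpa [hg] using hz i
  have haz : a = 0 := by
    have h2 := hz j
    rw [hg] at h2
    simp [hji] at h2
    linarith
  exact li.ne_zero i (by rw [← ha, haz, zero_smul])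

/-- Given a nonzero vector in an `m`-dimensional space, there is an alternating `m`-form and
a family of vectors starting with it on which the form is nonzero. -/
theorem aux_exists_vol {U : Type*} [AddCommGroup U] [Module ℝ U] [FiniteDimensional ℝ U]
    {m : ℕ} [NeZero m] (hm : m = Module.finrank ℝ U) {x : U} (hx : x ≠ 0) :
    ∃ (vol : U [⋀^Fin m]→ₗ[ℝ] ℝ) (u : Fin m → U), u 0 = x ∧ vol u ≠ 0 := by
  let c : Module.Basis (Fin m) ℝ U := (Module.finBasis ℝ U).reindex (finCongr hm.symm)
  obtain ⟨i, hi⟩ : ∃ i, c.repr x i ≠ 0 := by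
    by_contra hc
    push_neg at hc
    apply hx
    have : c.repr x = 0 := Finsupp.ext hc
    simpa using congrArg c.repr.symm this
  classical
  have hdet : c.det (Function.update (⇑c) i x) = c.repr x i := by
    rw [Module.Basis.det_apply, Module.Basis.toMatrix_update, Module.Basis.toMatrix_self,
      ← Matrix.cramer_apply, Matrix.cramer_one]
    rfl
  refine ⟨c.det, Function.update (⇑c) i x ∘ Equiv.swap 0 i, ?_, ?_⟩
  · show Function.update (⇑c) i x (Equiv.swap 0 i 0) = x
    rw [Equiv.swap_apply_left, Function.update_self]
  · rw [AlternatingMap.map_perm, hdet]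
    rw [Units.smul_def]
    exact smul_ne_zero (Units.ne_zero _) hi

/-- A suitable replacement map `q` for `p`, detecting a given nonzero vector. -/
theorem aux_exists_q (V U : Type*) [AddCommGroup V] [Module ℝ V] [FiniteDimensional ℝ V]
    [AddCommGroup U] [Module ℝ U] [FiniteDimensional ℝ U]
    (p : V →ₗ[ℝ] U) (hp : Function.Surjective p)
    (m : ℕ) (hm : m = Module.finrank ℝ U) (hm1 : 1 ≤ m)
    (v₀ : V) (hv : v₀ ≠ 0) :
    ∃ (q : V →ₗ[ℝ] U) (u₁ : U), Function.Surjective q ∧ q v₀ ≠ 0 ∧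
      ∀ w : V, p w = 0 → q w ∈ Submodule.span ℝ {u₁} := by
  by_cases hpv : p v₀ = 0
  · have : Nontrivial U := Module.nontrivial_of_finrank_pos (R := ℝ) (by omega)
    obtain ⟨u₁, hu₁⟩ := exists_ne (0 : U)
    obtain ⟨W, hW⟩ := Submodule.exists_isCompl (ℝ ∙ v₀)
    let e := LinearEquiv.toSpanNonzeroSingleton ℝ V v₀ hv
    let f : V →ₗ[ℝ] ℝ := e.symm.toLinearMap ∘ₗ (ℝ ∙ v₀).linearProjOfIsCompl W hW
    have hf : f v₀ = 1 := by
      have h1 : (ℝ ∙ v₀).linearProjOfIsCompl W hW v₀ =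
          ⟨v₀, Submodule.mem_span_singleton_self v₀⟩ :=
        Submodule.linearProjOfIsCompl_apply_left hW ⟨v₀, Submodule.mem_span_singleton_self v₀⟩
      have h2 : e 1 = ⟨v₀, Submodule.mem_span_singleton_self v₀⟩ := by
        apply Subtype.ext
        simp [e, LinearEquiv.toSpanNonzeroSingleton]
      simp only [f, LinearMap.comp_apply, h1, LinearEquiv.coe_coe]
      rw [← h2, LinearEquiv.symm_apply_apply]
    refine ⟨p + LinearMap.smulRight f u₁, u₁, ?_, ?_, ?_⟩
    · intro u
      obtain ⟨w', hw'⟩ := hp u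
      refine ⟨w' - f w' • v₀, ?_⟩
      simp [hw', hpv, hf, map_smul, smul_sub, sub_smul, mul_comm]
    · simp [hpv, hf, hu₁]
    · intro w hw
      exact Submodule.mem_span_singleton.mpr ⟨f w, by simp [hw]⟩
  · exact ⟨p, 0, hp, hpv, fun w hw => by simp [hw]⟩

/-- (Pointwise nondegeneracy of the canonical multisymplectic form on the
bundle of `2`-horizontal `m`-forms.)  Let `V`, `U` be finite-dimensional real vector spaces,
`p : V → U` a surjective linear map, and `m = dim U ≥ 1`.  Let `A ⊆ Λᵐ V*` be the subspace
of `2`-horizontal `m`-forms (those vanishing whenever two arguments lie in `ker p`).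
Suppose `v₀ ∈ V` and `α₀ ∈ A` are such that for every choice of pairs
`(v₁, α₁), …, (v_m, α_m) ∈ V × A` one has
`Σ_{i=0}^{m} (−1)ⁱ αᵢ(v₀, …, v̂ᵢ, …, v_m) = 0`
(the `i`-th summand evaluating `αᵢ` on the `m` vectors obtained by omitting `vᵢ`).
Then `v₀ = 0` and `α₀ = 0`. -/
theorem canonical_form_nondegenerate_twoHorizontal
    (V U : Type*) [AddCommGroup V] [Module ℝ V] [FiniteDimensional ℝ V]
    [AddCommGroup U] [Module ℝ U] [FiniteDimensional ℝ U]
    (p : V →ₗ[ℝ] U) (hp : Function.Surjective p)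
    (m : ℕ) (hm : m = Module.finrank ℝ U) (hm1 : 1 ≤ m)
    (v₀ : V) (α₀ : V [⋀^Fin m]→ₗ[ℝ] ℝ) (hα₀ : α₀ ∈ twoHorizontal p m)
    (h : ∀ q : Fin m → V × (V [⋀^Fin m]→ₗ[ℝ] ℝ),
      (∀ j : Fin m, (q j).2 ∈ twoHorizontal p m) →
      ∑ i : Fin (m+1),
        ((-1 : ℝ) ^ (i : ℕ)) *
          ((Fin.cons (v₀, α₀) q : Fin (m+1) → V × (V [⋀^Fin m]→ₗ[ℝ] ℝ)) i).2
            (fun j : Fin m =>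
              ((Fin.cons (v₀, α₀) q : Fin (m+1) → V × (V [⋀^Fin m]→ₗ[ℝ] ℝ))
                (i.succAbove j)).1) = 0) :
    v₀ = 0 ∧ α₀ = 0 := by
  classical
  have hzeroA : (0 : V [⋀^Fin m]→ₗ[ℝ] ℝ) ∈ twoHorizontal p m := fun w _ => rfl
  -- Step 1: α₀ = 0
  have hα : α₀ = 0 := by
    apply AlternatingMap.ext
    intro w
    have := h (fun j => (w j, 0)) (fun j => hzeroA)
    rw [Fin.sum_univ_succ] at this
    simpa using this
  -- Step 2: v₀ = 0
  refine ⟨?_, hα⟩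
  by_contra hv
  obtain ⟨n, rfl⟩ : ∃ n, m = n + 1 := ⟨m - 1, by omega⟩
  obtain ⟨q, u₁, hqsurj, hqv₀, hker⟩ := aux_exists_q V U p hp _ hm hm1 v₀ hv
  obtain ⟨vol, u, hu0, hvolu⟩ := aux_exists_vol hm hqv₀
  let β : V [⋀^Fin (n+1)]→ₗ[ℝ] ℝ := vol.compLinearMap q
  have hβ : β ∈ twoHorizontal p (n+1) := by
    intro w ⟨i, j, hij, hi, hj⟩
    exact vol.map_linearDependent _ (aux_notLI hij (hker _ hi) (hker _ hj))
  -- the lifted family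
  let g : Fin (n+1) → V := fun k => if hk : k = 0 then v₀ else Classical.choose (hqsurj (u k))
  have hg0 : g 0 = v₀ := by simp [g]
  have hqg : ∀ k, q (g k) = u k := by
    intro k
    by_cases hk : k = 0
    · subst hk; simp [g, hu0]
    · simp only [g, dif_neg hk]
      exact Classical.choose_spec (hqsurj (u k))
  have hβg : β g ≠ 0 := by
    have : β g = vol u := by
      show vol (fun k => q (g k)) = vol u
      simp only [hqg]
    rw [this]; exact hvolu
  -- apply the hypothesis
  have key := h (fun j => (g j, if j = 0 then β else 0))
    (fun j => by by_cases hj : j = 0 <;> simp [hj, hβ, hzeroA])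
  rw [Fin.sum_univ_succ, Fin.sum_univ_succ] at key
  have hargs : (fun j : Fin (n+1) =>
      ((Fin.cons (v₀, α₀) (fun j => (g j, if j = 0 then β else 0)) :
        Fin (n+2) → V × (V [⋀^Fin (n+1)]→ₗ[ℝ] ℝ))
        ((Fin.succ 0).succAbove j)).1) = g := by
    funext j
    refine Fin.cases ?_ (fun k => ?_) j
    · rw [Fin.succ_succAbove_zero, Fin.cons_zero, hg0]
    · rw [Fin.succ_succAbove_succ, Fin.cons_succ]
      simp [Fin.succAbove_zero]
  rw [Fin.cons_succ] at key
  simp only [hargs] at key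
  simp [hα, Fin.succ_ne_zero, hβg] at key
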